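/- Let d ≥ 2, let φ : ℝᵈ → ℝ be a nonnegative, strictly convex, continuously differentiable function, and set ψ = |·|² + φ. Fix ξ ∈ ℝᵈ. For y ≠ 0, let λ(y) be the unique nonnegative real number satisfying |ξ/2 − y|² + |ξ/2 + y|² − 2|ξ/2|² = ψ(ξ/2 − λ(y)y) + ψ(ξ/2 + λ(y)y) − 2ψ(ξ/2), and define T : ℝᵈ \ {0} → ℝᵈ by T(y) = λ(y)·y. Then T is continuously differentiable on ℝᵈ \ {0}, and the Jacobian determinant of T satisfies |det T′(y)| < 1 for every y ≠ 0. -/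

import Mathlib

open MeasureTheory Filter Topology
noncomputable section

variable {E : Type*} [NormedAddCommGroup E] [NormedSpace ℝ E]

/-- strict gradient inequality for strictly convex differentiable functions -/
lemma aux_grad_lt (φ : E → ℝ) (hconv : StrictConvexOn ℝ Set.univ φ)
    (hdiff : Differentiable ℝ φ) {a b : E} (hab : a ≠ b) :
    fderiv ℝ φ a (b - a) < φ b - φ a := by
  set q : ℝ → ℝ := fun t => φ (a + t • (b - a)) with hqdef
  have hq0 : q 0 = φ a := by simp [hqdef]
  have hq1 : q 1 = φ b := by simp [hqdef]
  have hqconv : ConvexOn ℝ Set.univ q := by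
    have h := (hconv.convexOn).comp_affineMap (AffineMap.lineMap a b)
    rw [Set.preimage_univ] at h
    suffices e : q = φ ∘ ⇑(AffineMap.lineMap a b) by rw [e]; exact h
    funext t
    simp [hqdef, AffineMap.lineMap_apply_module]
    congr 1
    module
  have hder : HasDerivAt q (fderiv ℝ φ a (b - a)) 0 := by
    have h1 : HasFDerivAt φ (fderiv ℝ φ a) a := (hdiff a).hasFDerivAt
    have h2 : HasDerivAt (fun t : ℝ => a + t • (b - a)) (b - a) 0 := by
      simpa using ((hasDerivAt_id (0 : ℝ)).smul_const (b - a)).const_add a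
    have h1' : HasFDerivAt φ (fderiv ℝ φ a) (a + (0:ℝ) • (b - a)) := by simpa using h1
    have := h1'.comp_hasDerivAt 0 h2
    exact this
  have key1 : q (1/2 : ℝ) < (q 0 + q 1) / 2 := by
    rw [hq0, hq1]
    have := hconv.2 (Set.mem_univ a) (Set.mem_univ b) hab
      (by norm_num : (0:ℝ) < 1/2) (by norm_num : (0:ℝ) < 1/2) (by norm_num)
    have harg : (1/2 : ℝ) • a + (1/2 : ℝ) • b = a + (1/2 : ℝ) • (b - a) := by module
    rw [harg] at this
    simp only [smul_eq_mul] at this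
    simp only [hqdef]
    linarith
  have key2 : fderiv ℝ φ a (b - a) ≤ 2 * (q (1/2:ℝ) - q 0) := by
    have htend : Tendsto (fun t => (q t - q 0) / t) (𝓝[>] (0:ℝ))
        (𝓝 (fderiv ℝ φ a (b - a))) := by
      have := (hasDerivAt_iff_tendsto_slope).mp hder
      have h2 := this.mono_left (nhdsWithin_mono 0 (by
        intro t ht; exact ne_of_gt ht : Set.Ioi (0:ℝ) ⊆ {(0:ℝ)}ᶜ))
      refine h2.congr' ?_
      filter_upwards [self_mem_nhdsWithin] with t ht
      simp [slope_def_field]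
    refine le_of_tendsto htend ?_
    filter_upwards [Ioo_mem_nhdsGT_of_mem (by norm_num : (0:ℝ) ∈ Set.Ico 0 (1/2:ℝ))]
      with t ht
    obtain ⟨ht0, ht2⟩ := ht
    have hconvq := hqconv.2 (Set.mem_univ (0:ℝ)) (Set.mem_univ (1/2:ℝ))
      (by linarith : (0:ℝ) ≤ 1 - 2*t) (by linarith : (0:ℝ) ≤ 2*t) (by ring)
    have harg : (1 - 2*t) • (0:ℝ) + (2*t) • (1/2:ℝ) = t := by
      simp [smul_eq_mul]; ring
    rw [harg] at hconvq
    rw [div_le_iff₀ ht0]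
    simp only [smul_eq_mul] at hconvq
    nlinarith
  linarith

/-- strict monotonicity of the gradient -/
lemma aux_grad_mono (φ : E → ℝ) (hconv : StrictConvexOn ℝ Set.univ φ)
    (hdiff : Differentiable ℝ φ) {a b : E} (hab : a ≠ b) :
    fderiv ℝ φ a (b - a) < fderiv ℝ φ b (b - a) := by
  have h1 := aux_grad_lt φ hconv hdiff hab
  have h2 := aux_grad_lt φ hconv hdiff (Ne.symm hab)
  have h3 : fderiv ℝ φ b (a - b) = - fderiv ℝ φ b (b - a) := by
    rw [← map_neg]; congr 1; abel
  rw [h3] at h2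
  linarith

/-- even-pair monotonicity for convex functions on ℝ -/
lemma aux_pair_mono (p : ℝ → ℝ) (hp : ConvexOn ℝ Set.univ p) {t t' : ℝ}
    (ht : 0 ≤ t) (htt' : t ≤ t') :
    p t + p (-t) ≤ p t' + p (-t') := by
  rcases eq_or_lt_of_le htt' with h | h
  · subst h; rfl
  have ht' : 0 < t' := lt_of_le_of_lt ht h
  set a := (t' + t) / (2 * t') with ha
  set b := (t' - t) / (2 * t') with hb
  have ha0 : 0 ≤ a := by positivity
  have hb0 : 0 ≤ b := by
    apply div_nonneg (by linarith) (by linarith)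
  have hab : a + b = 1 := by
    rw [ha, hb, ← add_div, div_eq_one_iff_eq (ne_of_gt (by linarith))]; ring
  have h1 := hp.2 (Set.mem_univ t') (Set.mem_univ (-t')) ha0 hb0 hab
  have h2 := hp.2 (Set.mem_univ t') (Set.mem_univ (-t')) hb0 ha0 (by linarith)
  have e1 : a • t' + b • (-t') = t := by
    simp only [smul_eq_mul, ha, hb]; field_simp; ring
  have e2 : b • t' + a • (-t') = -t := by
    simp only [smul_eq_mul, ha, hb]; field_simp; ring
  rw [e1] at h1; rw [e2] at h2
  simp only [smul_eq_mul] at h1 h2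
  have h3 := add_le_add h1 h2
  have h4 : a * p t' + b * p (-t') + (b * p t' + a * p (-t')) = p t' + p (-t') := by
    have hb1 : b = 1 - a := by linarith
    rw [hb1]; ring
  linarith

/-- determinant of `t • id + rank-one` -/
lemma aux_det {V : Type*} [AddCommGroup V] [Module ℝ V] [FiniteDimensional ℝ V]
    {t : ℝ} (ht : t ≠ 0) (hpos : 0 < Module.finrank ℝ V) (ℓ : V →ₗ[ℝ] ℝ) (y : V) :
    LinearMap.det (t • LinearMap.id + LinearMap.smulRight ℓ y)
      = t ^ (Module.finrank ℝ V - 1) * (t + ℓ y) := by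
  classical
  set n := Module.finrank ℝ V with hn
  let b : Module.Basis (Fin n) ℝ V := Module.finBasis ℝ V
  rw [← LinearMap.det_toMatrix b]
  have hmat : LinearMap.toMatrix b b (t • LinearMap.id + LinearMap.smulRight ℓ y)
      = t • (1 + Matrix.vecMulVec (fun i => t⁻¹ * b.repr y i) (fun j => ℓ (b j))) := by
    ext i j
    simp only [LinearMap.toMatrix_apply, LinearMap.add_apply, LinearMap.smul_apply,
      LinearMap.id_apply, LinearMap.smulRight_apply, map_add, _root_.map_smul,
      Finsupp.coe_add, Finsupp.coe_smul, Pi.add_apply, Pi.smul_apply, smul_eq_mul,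
      Matrix.smul_apply, Matrix.add_apply, Matrix.vecMulVec_apply, Matrix.one_apply,
      Module.Basis.repr_self_apply]
    rcases eq_or_ne i j with hij | hij
    · subst hij; simp; field_simp
    · simp [hij, Ne.symm hij]; field_simp
  rw [hmat, Matrix.det_smul, Matrix.vecMulVec_eq Unit, Matrix.det_one_add_replicateCol_mul_replicateRow]
  have hsum : dotProduct (fun j => ℓ (b j)) (fun i => t⁻¹ * b.repr y i) = t⁻¹ * ℓ y := by
    have : ℓ y = ∑ j, b.repr y j * ℓ (b j) := by
      conv_lhs => rw [← Module.Basis.sum_repr b y]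
      rw [map_sum]
      simp [smul_eq_mul]
    simp only [dotProduct]
    rw [this, Finset.mul_sum]
    congr 1; funext j; ring
  rw [hsum]
  have hcard : Fintype.card (Fin n) = n := Fintype.card_fin n
  rw [hcard]
  obtain ⟨k, hk⟩ : ∃ k, n = k + 1 := ⟨n - 1, by omega⟩
  rw [hk]
  simp only [Nat.add_sub_cancel, pow_succ]
  field_simp

variable {E : Type*} [NormedAddCommGroup E] [InnerProductSpace ℝ E]

def Hfun (φ : E → ℝ) (c z : E) : ℝ := 2*‖z‖^2 + (φ (c+z) + φ (c-z)) - 2*φ c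

lemma aux_line_convex (φ : E → ℝ) (hconv : ConvexOn ℝ Set.univ φ) (c y : E) :
    ConvexOn ℝ Set.univ (fun u : ℝ => φ (c + u • y)) := by
  have h := hconv.comp_affineMap (AffineMap.lineMap c (c + y))
  rw [Set.preimage_univ] at h
  suffices e : (fun u : ℝ => φ (c + u • y)) = φ ∘ ⇑(AffineMap.lineMap c (c + y)) by
    rw [e]; exact h
  funext u
  simp only [Function.comp_apply, AffineMap.lineMap_apply_module]
  congr 1
  module

lemma Hfun_smul (φ : E → ℝ) (c y : E) (t : ℝ) :
    Hfun φ c (t • y) = 2*(t^2*‖y‖^2) + (φ (c + t • y) + φ (c + (-t) • y)) - 2*φ c := by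
  simp only [Hfun, norm_smul, mul_pow, sq_abs, Real.norm_eq_abs, neg_smul, sub_eq_add_neg]

lemma aux_H_mono (φ : E → ℝ) (hconv : ConvexOn ℝ Set.univ φ) (c : E) {y : E}
    (hy : y ≠ 0) {t t' : ℝ} (ht : 0 ≤ t) (h : t < t') :
    Hfun φ c (t • y) < Hfun φ c (t' • y) := by
  have hp := aux_line_convex φ hconv c y
  have hpair := aux_pair_mono _ hp ht h.le
  have hy2 : 0 < ‖y‖^2 := by have := norm_pos_iff.mpr hy; positivity
  rw [Hfun_smul, Hfun_smul]
  have h2 : t^2 < t'^2 := by nlinarith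
  nlinarith [hpair]

lemma aux_H_one (φ : E → ℝ) (hconv : StrictConvexOn ℝ Set.univ φ) (c : E) {y : E}
    (hy : y ≠ 0) {t : ℝ} (ht : 1 ≤ t) :
    2*‖y‖^2 < Hfun φ c (t • y) := by
  have hp := aux_line_convex φ hconv.convexOn c y
  have hpair := aux_pair_mono _ hp (by norm_num : (0:ℝ) ≤ 1) ht
  have hmid : 2 * φ c < φ (c + (1:ℝ) • y) + φ (c + (-1:ℝ) • y) := by
    have hne : c + (1:ℝ) • y ≠ c + (-1:ℝ) • y := by
      intro hcontra
      apply hy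
      have h2 := sub_eq_zero.mpr hcontra
      rw [show c + (1:ℝ) • y - (c + (-1:ℝ) • y) = (2:ℝ) • y by module] at h2
      simpa using h2
    have h3 := hconv.2 (Set.mem_univ (c + (1:ℝ) • y)) (Set.mem_univ (c + (-1:ℝ) • y)) hne
      (by norm_num : (0:ℝ) < 1/2) (by norm_num : (0:ℝ) < 1/2) (by norm_num)
    have harg : (1/2:ℝ) • (c + (1:ℝ) • y) + (1/2:ℝ) • (c + (-1:ℝ) • y) = c := by module
    rw [harg] at h3
    simp only [smul_eq_mul] at h3
    linarith
  have hy2 : 0 < ‖y‖^2 := by have := norm_pos_iff.mpr hy; positivity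
  rw [Hfun_smul]
  have ht2 : 1 ≤ t^2 := by nlinarith
  simp only [one_smul] at hpair hmid
  nlinarith [hpair]

lemma aux_H_contDiff (φ : E → ℝ) (hφ : ContDiff ℝ 1 φ) (c : E) :
    ContDiff ℝ 1 (Hfun φ c) := by
  unfold Hfun
  exact ((contDiff_const.mul (contDiff_norm_sq ℝ)).add
    ((hφ.comp (contDiff_const.add contDiff_id)).add
      (hφ.comp (contDiff_const.sub contDiff_id)))).sub contDiff_const

lemma aux_H_deriv (φ : E → ℝ) (hdiff : Differentiable ℝ φ) (c z : E) :
    HasFDerivAt (Hfun φ c)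
      ((4:ℝ) • innerSL ℝ z + (fderiv ℝ φ (c+z) - fderiv ℝ φ (c-z))) z := by
  have h1 : HasFDerivAt (fun z : E => 2*‖z‖^2) ((2:ℝ) • (2 • innerSL ℝ z)) z := by
    have := (hasFDerivAt_id z).norm_sq
    simpa using this.const_mul (2:ℝ)
  have h2 : HasFDerivAt (fun w : E => φ (c + w)) (fderiv ℝ φ (c+z)) z := by
    have ha : HasFDerivAt (fun w : E => c + w) (ContinuousLinearMap.id ℝ E) z := by
      simpa using (hasFDerivAt_id z).const_add c
    have hb : HasFDerivAt φ (fderiv ℝ φ (c+z)) ((fun w : E => c + w) z) :=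
      (hdiff (c+z)).hasFDerivAt
    exact hb.comp z ha
  have h3 : HasFDerivAt (fun w : E => φ (c - w)) (-(fderiv ℝ φ (c-z))) z := by
    have ha : HasFDerivAt (fun w : E => c - w) (-(ContinuousLinearMap.id ℝ E)) z := by
      simpa using (hasFDerivAt_id z).const_sub c
    have hb : HasFDerivAt φ (fderiv ℝ φ (c-z)) ((fun w : E => c - w) z) :=
      (hdiff (c-z)).hasFDerivAt
    have := hb.comp z ha
    refine this.congr_fderiv ?_
    ext v
    simp
  have h4 := ((h1.add (h2.add h3)).sub_const (2*φ c))
  refine h4.congr_fderiv ?_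
  ext v
  simp [two_smul]
  ring

lemma aux_grad_pair (φ : E → ℝ) (hconv : StrictConvexOn ℝ Set.univ φ)
    (hdiff : Differentiable ℝ φ) (c : E) {y : E} (hy : y ≠ 0) {t : ℝ} (ht : 0 < t) :
    fderiv ℝ φ (c - t • y) y < fderiv ℝ φ (c + t • y) y := by
  have hne : (c - t • y) ≠ (c + t • y) := by
    intro hcontra
    apply hy
    have h2 := sub_eq_zero.mpr hcontra
    rw [show c - t • y - (c + t • y) = (-(2*t)) • y by module] at h2
    simpa [ht.ne'] using h2
  have h := aux_grad_mono φ hconv hdiff hne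
  have harg : (c + t • y) - (c - t • y) = (2*t) • y := by module
  rw [harg, _root_.map_smul, _root_.map_smul, smul_eq_mul, smul_eq_mul] at h
  have h2t : 0 < 2*t := by linarith
  exact lt_of_mul_lt_mul_left (by linarith) h2t.le
set_option maxHeartbeats 1000000 in
theorem statement14 (d : ℕ) (hd : 2 ≤ d)
    (φ : EuclideanSpace ℝ (Fin d) → ℝ) (hφ0 : ∀ y, 0 ≤ φ y)
    (hφC1 : ContDiff ℝ 1 φ) (hφsconv : StrictConvexOn ℝ Set.univ φ)
    (ψ : EuclideanSpace ℝ (Fin d) → ℝ) (hψ : ψ = fun y => ‖y‖ ^ 2 + φ y)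
    (ξ : EuclideanSpace ℝ (Fin d))
    (lam : EuclideanSpace ℝ (Fin d) → ℝ)
    (hlam : ∀ y : EuclideanSpace ℝ (Fin d), y ≠ 0 → 0 ≤ lam y ∧
      ‖(2:ℝ)⁻¹ • ξ - y‖ ^ 2 + ‖(2:ℝ)⁻¹ • ξ + y‖ ^ 2 - 2 * ‖(2:ℝ)⁻¹ • ξ‖ ^ 2 =
        ψ ((2:ℝ)⁻¹ • ξ - lam y • y) + ψ ((2:ℝ)⁻¹ • ξ + lam y • y) -
          2 * ψ ((2:ℝ)⁻¹ • ξ))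
    (T : EuclideanSpace ℝ (Fin d) → EuclideanSpace ℝ (Fin d))
    (hT : T = fun y => lam y • y) :
    ContDiffOn ℝ 1 T {(0 : EuclideanSpace ℝ (Fin d))}ᶜ ∧
    ∀ y : EuclideanSpace ℝ (Fin d), y ≠ 0 →
      |LinearMap.det (fderiv ℝ T y : EuclideanSpace ℝ (Fin d) →ₗ[ℝ] EuclideanSpace ℝ (Fin d))| < 1 := by
  have hφdiff : Differentiable ℝ φ := hφC1.differentiable one_ne_zero
  set c : EuclideanSpace ℝ (Fin d) := (2:ℝ)⁻¹ • ξ with hc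
  -- the key identity
  have key : ∀ y : EuclideanSpace ℝ (Fin d), y ≠ 0 →
      Hfun φ c (lam y • y) = 2*‖y‖^2 := by
    intro y hy
    obtain ⟨-, heq⟩ := hlam y hy
    rw [hψ] at heq
    simp only at heq
    rw [norm_sub_sq_real, norm_add_sq_real, norm_sub_sq_real, norm_add_sq_real] at heq
    unfold Hfun
    linarith
  -- bounds on lam
  have hbounds : ∀ y : EuclideanSpace ℝ (Fin d), y ≠ 0 → 0 < lam y ∧ lam y < 1 := by
    intro y hy
    have h0 := (hlam y hy).1
    have hy2 : 0 < ‖y‖^2 := by have := norm_pos_iff.mpr hy; positivity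
    constructor
    · rcases eq_or_lt_of_le h0 with h | h
      · exfalso
        have hk := key y hy
        rw [← h] at hk
        simp only [zero_smul] at hk
        unfold Hfun at hk
        simp at hk
        linarith
      · exact h
    · by_contra h1
      push_neg at h1
      have := aux_H_one φ hφsconv c hy h1
      rw [key y hy] at this
      linarith
  -- continuity of lam away from 0
  have hlamcont : ∀ y₀ : EuclideanSpace ℝ (Fin d), y₀ ≠ 0 → ContinuousAt lam y₀ := by
    intro y₀ hy₀
    obtain ⟨ht0, ht1⟩ := hbounds y₀ hy₀
    have hcontH : Continuous (Hfun φ c) := (aux_H_contDiff φ hφC1 c).continuous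
    apply Metric.tendsto_nhds.mpr
    intro ε hε
    set δ := min (ε/2) (lam y₀ / 2) with hδdef
    have hδ : 0 < δ := lt_min (by linarith) (by linarith)
    have hδε : δ < ε := lt_of_le_of_lt (min_le_left _ _) (by linarith)
    have htm0 : 0 ≤ lam y₀ - δ := by
      have := min_le_right (ε/2) (lam y₀/2); simp only [← hδdef] at this; linarith
    have hu : Hfun φ c ((lam y₀ - δ) • y₀) < 2*‖y₀‖^2 := by
      rw [← key y₀ hy₀]
      exact aux_H_mono φ hφsconv.convexOn c hy₀ htm0 (by linarith)
    have hv : 2*‖y₀‖^2 < Hfun φ c ((lam y₀ + δ) • y₀) := by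
      rw [← key y₀ hy₀]
      exact aux_H_mono φ hφsconv.convexOn c hy₀ ht0.le (by linarith)
    have c1 : ContinuousAt (fun y : EuclideanSpace ℝ (Fin d) =>
        Hfun φ c ((lam y₀ - δ) • y) - 2*‖y‖^2) y₀ :=
      ((hcontH.comp (continuous_const_smul _)).sub
        (continuous_const.mul (continuous_norm.pow 2))).continuousAt
    have c2 : ContinuousAt (fun y : EuclideanSpace ℝ (Fin d) =>
        Hfun φ c ((lam y₀ + δ) • y) - 2*‖y‖^2) y₀ :=
      ((hcontH.comp (continuous_const_smul _)).sub
        (continuous_const.mul (continuous_norm.pow 2))).continuousAt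
    have e1 : ∀ᶠ y in 𝓝 y₀, Hfun φ c ((lam y₀ - δ) • y) - 2*‖y‖^2 < 0 :=
      c1.eventually_lt_const (by simpa using sub_neg.mpr hu)
    have e2 : ∀ᶠ y in 𝓝 y₀, 0 < Hfun φ c ((lam y₀ + δ) • y) - 2*‖y‖^2 :=
      c2.eventually_const_lt (by simpa using sub_pos.mpr hv)
    have e3 : ∀ᶠ y in 𝓝 y₀, y ≠ (0 : EuclideanSpace ℝ (Fin d)) :=
      eventually_ne_nhds hy₀
    filter_upwards [e1, e2, e3] with y h1 h2 h3
    have hky := key y h3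
    have hlamy0 := (hbounds y h3).1
    have hlow : lam y₀ - δ < lam y := by
      by_contra hcon
      push_neg at hcon
      rcases eq_or_lt_of_le hcon with h | h
      · rw [← h] at h1; rw [hky] at h1; linarith
      · have := aux_H_mono φ hφsconv.convexOn c h3 hlamy0.le h
        rw [hky] at this; linarith
    have hhigh : lam y < lam y₀ + δ := by
      by_contra hcon
      push_neg at hcon
      rcases eq_or_lt_of_le hcon with h | h
      · rw [h] at h2; rw [hky] at h2; linarith
      · have := aux_H_mono φ hφsconv.convexOn c h3 (by linarith : (0:ℝ) ≤ lam y₀ + δ) h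
        rw [hky] at this; linarith
    rw [Real.dist_eq, abs_sub_lt_iff]
    constructor <;> linarith
  -- derivative facts for H
  have hDH : ∀ z : EuclideanSpace ℝ (Fin d), HasFDerivAt (Hfun φ c)
      ((4:ℝ) • innerSL ℝ z + (fderiv ℝ φ (c+z) - fderiv ℝ φ (c-z))) z :=
    fun z => aux_H_deriv φ hφdiff c z
  have hkappa : ∀ (y : EuclideanSpace ℝ (Fin d)), y ≠ 0 → ∀ t : ℝ, 0 < t →
      4*(t*‖y‖^2) < ((4:ℝ) • innerSL ℝ (t • y) +
        (fderiv ℝ φ (c+t•y) - fderiv ℝ φ (c-t•y))) y := by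
    intro y hy t ht
    have hs := aux_grad_pair φ hφsconv hφdiff c hy ht
    simp only [ContinuousLinearMap.add_apply, ContinuousLinearMap.smul_apply,
      ContinuousLinearMap.sub_apply, innerSL_apply_apply, smul_eq_mul]
    rw [real_inner_smul_left, real_inner_self_eq_norm_sq]
    linarith
  -- lam is C¹ away from 0 (implicit function theorem)
  have hlamC1 : ∀ y₀ : EuclideanSpace ℝ (Fin d), y₀ ≠ 0 → ContDiffAt ℝ 1 lam y₀ := by
    intro y₀ hy₀
    obtain ⟨ht0, ht1⟩ := hbounds y₀ hy₀
    set Φ : EuclideanSpace ℝ (Fin d) × ℝ → EuclideanSpace ℝ (Fin d) × ℝ :=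
      fun p => (p.1, Hfun φ c (p.2 • p.1) - 2*‖p.1‖^2) with hΦdef
    have hΦcd : ContDiff ℝ 1 Φ :=
      contDiff_fst.prodMk
        (((aux_H_contDiff φ hφC1 c).comp (contDiff_snd.smul contDiff_fst)).sub
          (contDiff_const.mul ((contDiff_norm_sq ℝ).comp contDiff_fst)))
    have hsmul := (hasFDerivAt_snd (𝕜 := ℝ)
        (p := ((y₀, lam y₀) : EuclideanSpace ℝ (Fin d) × ℝ))).smul hasFDerivAt_fst
    have hB0 := (hDH ((lam y₀) • y₀)).comp ((y₀, lam y₀) :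
        EuclideanSpace ℝ (Fin d) × ℝ) hsmul
    have hB : HasFDerivAt (fun p : EuclideanSpace ℝ (Fin d) × ℝ =>
        Hfun φ c (p.2 • p.1)) _ (y₀, lam y₀) := hB0
    have hN := (hasFDerivAt_fst (p := ((y₀, lam y₀) :
        EuclideanSpace ℝ (Fin d) × ℝ))).norm_sq.const_mul (2:ℝ)
    have hAexp0 := (hasFDerivAt_fst (p := ((y₀, lam y₀) :
        EuclideanSpace ℝ (Fin d) × ℝ))).prodMk (hB.sub hN)
    have hAexp : HasFDerivAt Φ _ (y₀, lam y₀) := hAexp0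
    have hΦat : ContDiffAt ℝ 1 Φ (y₀, lam y₀) := hΦcd.contDiffAt
    have hκ := hkappa y₀ hy₀ (lam y₀) ht0
    have hy2 : (0:ℝ) < ‖y₀‖^2 := by have := norm_pos_iff.mpr hy₀; positivity
    have hκpos : 0 < ((4:ℝ) • innerSL ℝ ((lam y₀) • y₀) +
        (fderiv ℝ φ (c+(lam y₀) • y₀) - fderiv ℝ φ (c-(lam y₀) • y₀))) y₀ := by
      have : (0:ℝ) < 4*((lam y₀)*‖y₀‖^2) := by positivity
      linarith
    -- injectivity of the derivative
    have hinj : Function.Injective (fderiv ℝ Φ (y₀, lam y₀)) := by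
      rw [hAexp.fderiv]
      rw [injective_iff_map_eq_zero]
      intro p hp
      rw [Prod.ext_iff] at hp
      obtain ⟨hp1, hp2⟩ := hp
      simp only [ContinuousLinearMap.prod_apply, ContinuousLinearMap.coe_fst',
        Prod.fst_zero, Prod.snd_zero] at hp1 hp2
      have hp1' : p.1 = 0 := hp1
      simp only [ContinuousLinearMap.sub_apply, ContinuousLinearMap.comp_apply,
        ContinuousLinearMap.add_apply, ContinuousLinearMap.smul_apply,
        ContinuousLinearMap.coe_fst', ContinuousLinearMap.smulRight_apply,
        ContinuousLinearMap.coe_snd', hp1', smul_zero, zero_add, _root_.map_smul,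
        smul_eq_mul, inner_zero_right, mul_zero, sub_zero] at hp2
      simp only [map_zero, smul_zero, mul_zero, sub_zero, innerSL_apply_apply] at hp2
      rw [real_inner_self_eq_norm_sq] at hp2
      have hexp : ((4:ℝ) • innerSL ℝ ((lam y₀) • y₀) +
          (fderiv ℝ φ (c+(lam y₀) • y₀) - fderiv ℝ φ (c-(lam y₀) • y₀))) y₀
          = 4*(lam y₀ * ‖y₀‖^2) + ((fderiv ℝ φ (c+(lam y₀) • y₀)) y₀ -
            (fderiv ℝ φ (c-(lam y₀) • y₀)) y₀) := by
        simp only [ContinuousLinearMap.add_apply, ContinuousLinearMap.smul_apply,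
          ContinuousLinearMap.sub_apply, innerSL_apply_apply, smul_eq_mul]
        rw [real_inner_smul_left, real_inner_self_eq_norm_sq]
      have hKpos : 0 < 4*(lam y₀ * ‖y₀‖^2) + ((fderiv ℝ φ (c+(lam y₀) • y₀)) y₀ -
          (fderiv ℝ φ (c-(lam y₀) • y₀)) y₀) := by
        rw [← hexp]
        have h4 : (0:ℝ) < 4*(lam y₀ * ‖y₀‖^2) := by positivity
        linarith [hκ]
      have hp2' : p.2 = 0 := by
        rcases mul_eq_zero.mp hp2 with h | h
        · exact h
        · exfalso
          rw [h] at hKpos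
          exact lt_irrefl 0 hKpos
      exact Prod.ext hp1' hp2'
    have hbij : Function.Bijective ((fderiv ℝ Φ (y₀, lam y₀)) :
        EuclideanSpace ℝ (Fin d) × ℝ →ₗ[ℝ] EuclideanSpace ℝ (Fin d) × ℝ) :=
      ⟨hinj, LinearMap.injective_iff_surjective.mp hinj⟩
    let eL := LinearEquiv.ofBijective _ hbij
    let e := eL.toContinuousLinearEquiv
    have he : (e : (EuclideanSpace ℝ (Fin d) × ℝ) →L[ℝ] (EuclideanSpace ℝ (Fin d) × ℝ))
        = fderiv ℝ Φ (y₀, lam y₀) := by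
      apply ContinuousLinearMap.coe_injective
      rfl
    have hA : HasFDerivAt Φ
        ((e : (EuclideanSpace ℝ (Fin d) × ℝ) →L[ℝ] (EuclideanSpace ℝ (Fin d) × ℝ)))
        (y₀, lam y₀) := by
      rw [he]; exact hAexp.differentiableAt.hasFDerivAt
    have hstrict := hΦat.hasStrictFDerivAt' hA one_ne_zero
    set g := hstrict.localInverse Φ e (y₀, lam y₀) with hgdef
    have hgC1 : ContDiffAt ℝ 1 g (Φ (y₀, lam y₀)) := hΦat.to_localInverse hA one_ne_zero
    have hΦpt : Φ (y₀, lam y₀) = (y₀, 0) := by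
      have hk := key y₀ hy₀
      simp only [hΦdef]
      rw [hk]
      simp
    have hli := hstrict.eventually_left_inverse
    have htc : ContinuousAt (fun y : EuclideanSpace ℝ (Fin d) => (y, lam y)) y₀ :=
      continuousAt_id.prodMk (hlamcont y₀ hy₀)
    have hev1 : ∀ᶠ y in 𝓝 y₀, g (Φ (y, lam y)) = (y, lam y) := htc.eventually hli
    have hev2 : ∀ᶠ y in 𝓝 y₀, y ≠ (0 : EuclideanSpace ℝ (Fin d)) := eventually_ne_nhds hy₀
    have heq : (fun y : EuclideanSpace ℝ (Fin d) => (g (y, 0)).2) =ᶠ[𝓝 y₀] lam := by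
      filter_upwards [hev1, hev2] with y h1 h2
      have hΦy : Φ (y, lam y) = (y, 0) := by
        have hk := key y h2
        simp only [hΦdef]
        rw [hk]
        simp
      rw [hΦy] at h1
      simp only [h1]
    have hg0 : ContDiffAt ℝ 1 g (y₀, 0) := by rwa [hΦpt] at hgC1
    have hgC1' : ContDiffAt ℝ 1 (fun y : EuclideanSpace ℝ (Fin d) => (g (y, 0)).2) y₀ :=
      contDiffAt_snd.comp y₀ (hg0.comp y₀ (contDiffAt_id.prodMk contDiffAt_const))
    exact hgC1'.congr_of_eventuallyEq heq.symm
  constructor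
  · intro y hy
    rw [Set.mem_compl_singleton_iff] at hy
    have : ContDiffAt ℝ 1 T y := by
      rw [hT]; exact (hlamC1 y hy).smul contDiffAt_id
    exact this.contDiffWithinAt
  · intro y₀ hy₀
    obtain ⟨ht0, ht1⟩ := hbounds y₀ hy₀
    have hdl : HasFDerivAt lam (fderiv ℝ lam y₀) y₀ :=
      ((hlamC1 y₀ hy₀).differentiableAt one_ne_zero).hasFDerivAt
    set ℓ := fderiv ℝ lam y₀ with hℓdef
    have hTd' : HasFDerivAt (fun y : EuclideanSpace ℝ (Fin d) => lam y • y)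
        (lam y₀ • ContinuousLinearMap.id ℝ (EuclideanSpace ℝ (Fin d)) + ℓ.smulRight y₀)
        y₀ := by
      exact hdl.smul (hasFDerivAt_id y₀)
    have hTd : HasFDerivAt T
        (lam y₀ • ContinuousLinearMap.id ℝ (EuclideanSpace ℝ (Fin d)) + ℓ.smulRight y₀)
        y₀ := by rw [hT]; exact hTd'
    have hLHS0 := HasFDerivAt.comp (𝕜 := ℝ) (f := fun y : EuclideanSpace ℝ (Fin d) => lam y • y)
      y₀ (hDH ((lam y₀) • y₀)) hTd'
    have hLHS : HasFDerivAt (fun y : EuclideanSpace ℝ (Fin d) =>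
        Hfun φ c (lam y • y)) _ y₀ := hLHS0
    have hRHS0 := (hasFDerivAt_id y₀).norm_sq.const_mul (2:ℝ)
    have hRHS : HasFDerivAt (fun y : EuclideanSpace ℝ (Fin d) => 2*‖y‖^2) _ y₀ := hRHS0
    have hev : (fun y : EuclideanSpace ℝ (Fin d) => Hfun φ c (lam y • y))
        =ᶠ[𝓝 y₀] (fun y => 2*‖y‖^2) := by
      filter_upwards [eventually_ne_nhds hy₀] with y hy
      exact key y hy
    have hfdeq := hev.fderiv_eq (𝕜 := ℝ)
    rw [hLHS.fderiv, hRHS.fderiv] at hfdeq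
    have happ := DFunLike.congr_fun hfdeq y₀
    simp only [ContinuousLinearMap.comp_apply, ContinuousLinearMap.add_apply,
      ContinuousLinearMap.smul_apply, ContinuousLinearMap.coe_id', id_eq,
      ContinuousLinearMap.smulRight_apply, innerSL_apply_apply, smul_eq_mul] at happ
    have harg : lam y₀ • y₀ + ℓ y₀ • y₀ = (lam y₀ + ℓ y₀) • y₀ := by module
    rw [harg] at happ
    rw [real_inner_smul_left, real_inner_smul_right, real_inner_self_eq_norm_sq] at happ
    simp only [ContinuousLinearMap.sub_apply, nsmul_eq_mul, Nat.cast_ofNat] at happ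
    have hκ := hkappa y₀ hy₀ (lam y₀) ht0
    have hy2 : (0:ℝ) < ‖y₀‖^2 := by have := norm_pos_iff.mpr hy₀; positivity
    set κ : ℝ := ((4:ℝ) • innerSL ℝ ((lam y₀) • y₀) +
        (fderiv ℝ φ (c+(lam y₀) • y₀) - fderiv ℝ φ (c-(lam y₀) • y₀))) y₀ with hκdef
    set μ : ℝ := lam y₀ + ℓ y₀ with hμdef
    have hκpos : 0 < κ := by
      have : (0:ℝ) < 4*((lam y₀)*‖y₀‖^2) := by positivity
      linarith
    have hκs : κ = 4*(lam y₀ * ‖y₀‖^2) +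
        (fderiv ℝ φ (c+(lam y₀) • y₀) y₀ - fderiv ℝ φ (c-(lam y₀) • y₀) y₀) := by
      rw [hκdef]
      simp only [ContinuousLinearMap.add_apply, ContinuousLinearMap.smul_apply,
        ContinuousLinearMap.sub_apply, innerSL_apply_apply, smul_eq_mul]
      rw [real_inner_smul_left, real_inner_self_eq_norm_sq]
    have hμκ : μ * κ = 4*‖y₀‖^2 := by
      simp only [_root_.map_smul, smul_eq_mul] at happ
      rw [hκs]
      linear_combination happ
    have hμpos : 0 < μ := by
      by_contra hcon
      push_neg at hcon
      nlinarith
    have hμt : μ * lam y₀ < 1 := by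
      rw [← mul_lt_mul_iff_left₀ hκpos]
      calc μ * lam y₀ * κ = lam y₀ * (μ * κ) := by ring
      _ = lam y₀ * (4*‖y₀‖^2) := by rw [hμκ]
      _ = 4*(lam y₀ * ‖y₀‖^2) := by ring
      _ < κ := hκ
      _ = 1 * κ := by ring
    -- compute the determinant
    rw [hTd.fderiv]
    have hlin : ((lam y₀ • ContinuousLinearMap.id ℝ (EuclideanSpace ℝ (Fin d)) +
          ℓ.smulRight y₀ : EuclideanSpace ℝ (Fin d) →L[ℝ] EuclideanSpace ℝ (Fin d)) :
          EuclideanSpace ℝ (Fin d) →ₗ[ℝ] EuclideanSpace ℝ (Fin d))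
        = lam y₀ • LinearMap.id +
            LinearMap.smulRight (ℓ : EuclideanSpace ℝ (Fin d) →ₗ[ℝ] ℝ) y₀ := by
      ext v
      simp
    rw [hlin]
    have hrank : 0 < Module.finrank ℝ (EuclideanSpace ℝ (Fin d)) := by
      rw [finrank_euclideanSpace_fin]; omega
    rw [aux_det ht0.ne' hrank _ y₀, finrank_euclideanSpace_fin]
    have hℓcoe : (ℓ : EuclideanSpace ℝ (Fin d) →ₗ[ℝ] ℝ) y₀ = ℓ y₀ := rfl
    rw [hℓcoe]
    obtain ⟨k, hk2⟩ : ∃ k, d - 1 = k + 1 := ⟨d - 2, by omega⟩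
    rw [hk2]
    have hpow : (0:ℝ) < lam y₀ ^ k := pow_pos ht0 k
    have hpow1 : lam y₀ ^ k ≤ 1 := pow_le_one₀ ht0.le ht1.le
    have hval : lam y₀ ^ (k+1) * (lam y₀ + ℓ y₀) = lam y₀ ^ k * (μ * lam y₀) := by
      rw [pow_succ, hμdef]; ring
    rw [abs_of_pos (by rw [hval]; positivity)]
    rw [hval]
    calc lam y₀ ^ k * (μ * lam y₀) < lam y₀ ^ k * 1 := by
          exact mul_lt_mul_of_pos_left hμt hpow
    _ ≤ 1 := by linarith
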